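/- arXiv:1611.01950 — 2 statements merged into one kernel-verified Lean document; each statement's English description precedes it below -/
import Mathlib

section
/- Let M ≥ 1 be an integer, ζ > 0 real, and let G be an L×L positive semidefinite Hermitian matrix with unit diagonal entries (G_{ii} = 1). Define e = (1/L)·tr((I_L + MζG)⁻¹ G). Then e ≤ 1/(1 + Mζ). -/
open Matrix ComplexOrder

lemma tangent_bound (c x : ℝ) (hc : 0 < c) (hx : 0 ≤ x) :
    x / (1 + c * x) ≤ 1 / (1 + c) + (x - 1) / (1 + c) ^ 2 := by
  have h1 : 0 < 1 + c * x := by positivity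
  have h2 : 0 < 1 + c := by positivity
  rw [div_add_div _ _ h2.ne' (by positivity), div_le_div_iff₀ h1 (by positivity)]
  nlinarith [mul_nonneg (mul_nonneg h2.le hc.le) (sq_nonneg (x - 1))]

theorem normalized_mse_upper_bound {L : ℕ} (M : ℕ) (hM : 1 ≤ M) (ζ : ℝ) (hζ : 0 < ζ)
    (G : Matrix (Fin L) (Fin L) ℂ) (hG : G.PosSemidef) (hdiag : ∀ i, G i i = 1) :
    (1 / (L : ℝ)) * ((((1 : Matrix (Fin L) (Fin L) ℂ) +
        ((M * ζ : ℝ) : ℂ) • G)⁻¹ * G).trace.re) ≤ 1 / (1 + M * ζ) := by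
  have hMpos : (0 : ℝ) < M := by exact_mod_cast hM
  set c : ℝ := M * ζ with hcdef
  have hc : 0 < c := mul_pos hMpos hζ
  have hH := hG.1
  set lam := hH.eigenvalues with hlamdef
  have hlam : ∀ i, 0 ≤ lam i := hG.eigenvalues_nonneg
  set U : Matrix (Fin L) (Fin L) ℂ := (hH.eigenvectorUnitary : Matrix (Fin L) (Fin L) ℂ) with hUdef
  have hU1 : U * star U = 1 := (Matrix.mem_unitaryGroup_iff).mp hH.eigenvectorUnitary.2
  have hU2 : star U * U = 1 := (Matrix.mem_unitaryGroup_iff').mp hH.eigenvectorUnitary.2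
  set D : Matrix (Fin L) (Fin L) ℂ := diagonal (fun i => ((lam i : ℝ) : ℂ)) with hDdef
  have hspec : G = U * D * star U := hH.spectral_theorem
  have hpos : ∀ i, (0 : ℝ) < 1 + c * lam i := fun i => by
    have := hlam i; positivity
  set D' : Matrix (Fin L) (Fin L) ℂ :=
    diagonal (fun i => ((1 + c * lam i : ℝ) : ℂ)) with hD'def
  set E : Matrix (Fin L) (Fin L) ℂ :=
    diagonal (fun i => (((1 + c * lam i : ℝ))⁻¹ : ℂ)) with hEdef
  have hd : D' = 1 + (c : ℂ) • D := by
    rw [hDdef, hD'def, ← Matrix.diagonal_smul, ← Matrix.diagonal_one, Matrix.diagonal_add]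
    congr 1
    funext i
    simp only [Pi.add_apply, Pi.smul_apply, smul_eq_mul]
    push_cast
    ring
  have key1 : (1 : Matrix (Fin L) (Fin L) ℂ) + (c : ℂ) • G = U * D' * star U := by
    rw [hspec, ← hU1, hd, Matrix.mul_add, Matrix.add_mul, Matrix.mul_one,
      Matrix.mul_smul, Matrix.smul_mul]
  have hD'E : D' * E = 1 := by
    rw [hD'def, hEdef, Matrix.diagonal_mul_diagonal]
    have h : (fun i => ((1 + c * lam i : ℝ) : ℂ) * (((1 + c * lam i : ℝ) : ℂ))⁻¹)
        = fun _ : Fin L => (1 : ℂ) := by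
      funext i
      rw [mul_inv_cancel₀]
      exact_mod_cast (hpos i).ne'
    rw [h, Matrix.diagonal_one]
  have hinv : ((1 : Matrix (Fin L) (Fin L) ℂ) + (c : ℂ) • G)⁻¹ = U * E * star U := by
    apply Matrix.inv_eq_right_inv
    rw [key1]
    calc U * D' * star U * (U * E * star U)
        = U * D' * (star U * U) * (E * star U) := by
          simp only [Matrix.mul_assoc]
      _ = U * (D' * E) * star U := by rw [hU2]; simp only [Matrix.mul_one, Matrix.mul_assoc]
      _ = 1 := by rw [hD'E, Matrix.mul_one, hU1]
  have htr : (((1 : Matrix (Fin L) (Fin L) ℂ) + (c : ℂ) • G)⁻¹ * G).trace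
      = ∑ i, (((1 + c * lam i : ℝ))⁻¹ : ℂ) * ((lam i : ℝ) : ℂ) := by
    rw [hinv]
    nth_rewrite 1 [hspec]
    have h : U * E * star U * (U * D * star U) = U * (E * D) * star U := by
      calc U * E * star U * (U * D * star U)
          = U * E * (star U * U) * (D * star U) := by simp only [Matrix.mul_assoc]
        _ = U * (E * D) * star U := by rw [hU2]; simp only [Matrix.mul_one, Matrix.mul_assoc]
    rw [h, Matrix.trace_mul_cycle, hU2, Matrix.one_mul,
      hEdef, hDdef, Matrix.diagonal_mul_diagonal, Matrix.trace_diagonal]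
  have htrace_re : (((1 : Matrix (Fin L) (Fin L) ℂ) + (c : ℂ) • G)⁻¹ * G).trace.re
      = ∑ i, (1 + c * lam i)⁻¹ * lam i := by
    rw [htr]
    rw [show (∑ i, (((1 + c * lam i : ℝ))⁻¹ : ℂ) * ((lam i : ℝ) : ℂ))
        = ((∑ i, (1 + c * lam i)⁻¹ * lam i : ℝ) : ℂ) by push_cast; ring]
    exact Complex.ofReal_re _
  have hsum : ∑ i, lam i = L := by
    have h1 : G.trace = (L : ℂ) := by
      rw [Matrix.trace]
      simp [Matrix.diag, hdiag]
    have h2 : G.trace = ((∑ i, lam i : ℝ) : ℂ) := by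
      nth_rewrite 1 [hspec]
      rw [Matrix.trace_mul_cycle, hU2, Matrix.one_mul,
        hDdef, Matrix.trace_diagonal]
      push_cast
      ring
    have h3 := h1.symm.trans h2
    exact_mod_cast h3.symm
  rw [htrace_re]
  have h1c : 0 < 1 + c := by positivity
  have hLsum : ∑ i, (1 + c * lam i)⁻¹ * lam i ≤ L / (1 + c) := by
    have hstep : ∀ i, (1 + c * lam i)⁻¹ * lam i ≤ 1 / (1 + c) + (lam i - 1) / (1 + c) ^ 2 := by
      intro i
      rw [inv_mul_eq_div]
      exact tangent_bound c (lam i) hc (hlam i)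
    calc ∑ i, (1 + c * lam i)⁻¹ * lam i
        ≤ ∑ i, (1 / (1 + c) + (lam i - 1) / (1 + c) ^ 2) :=
          Finset.sum_le_sum fun i _ => hstep i
      _ = L / (1 + c) := by
          rw [Finset.sum_add_distrib, ← Finset.sum_div, ← Finset.sum_div,
            Finset.sum_sub_distrib, hsum]
          simp
  rcases Nat.eq_zero_or_pos L with hL | hL
  · subst hL
    simp
    positivity
  · have hLpos : (0 : ℝ) < L := by exact_mod_cast hL
    rw [div_mul_eq_mul_div, one_mul, div_le_div_iff₀ hLpos h1c]
    calc (∑ i, (1 + c * lam i)⁻¹ * lam i) * (1 + c)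
        ≤ (L / (1 + c)) * (1 + c) :=
          mul_le_mul_of_nonneg_right hLsum h1c.le
      _ = (L : ℝ) := by field_simp
      _ = 1 * L := by ring
end

section
/- Let A be an N×N positive definite Hermitian matrix with condition number κ = λ_max(A)/λ_min(A). Then tr(A⁻¹) ≤ ((1+κ)²/(4κ)) · ∑_{i=1}^N 1/a_{ii}, where a_{ii} are the diagonal entries of A. -/
open Matrix ComplexOrder

theorem trace_inv_kantorovich_upper_bound {N : ℕ} [NeZero N]
    (A : Matrix (Fin N) (Fin N) ℂ) (hA : A.PosDef) :
    (A⁻¹).trace.re ≤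
      ((1 + (⨆ i, hA.1.eigenvalues i) / (⨅ i, hA.1.eigenvalues i)) ^ 2 /
          (4 * ((⨆ i, hA.1.eigenvalues i) / (⨅ i, hA.1.eigenvalues i)))) *
        ∑ i, 1 / (A i i).re := by
  set lam := hA.1.eigenvalues with hlam
  set m := ⨅ i, lam i with hm
  set M := ⨆ i, lam i with hM
  have hpos : ∀ i, 0 < lam i := hA.eigenvalues_pos
  have hmle : ∀ i, m ≤ lam i := fun i =>
    ciInf_le (Set.Finite.bddBelow (Set.finite_range _)) i
  have hleM : ∀ i, lam i ≤ M := fun i =>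
    le_ciSup (Set.Finite.bddAbove (Set.finite_range _)) i
  obtain ⟨i₀⟩ : Nonempty (Fin N) := ⟨⟨0, Nat.pos_of_ne_zero (NeZero.ne N)⟩⟩
  have hm0 : 0 < m := by
    have : Nonempty (Fin N) := ⟨⟨0, Nat.pos_of_ne_zero (NeZero.ne N)⟩⟩
    obtain ⟨j, hj⟩ := Finite.exists_min lam
    exact lt_of_lt_of_le (hpos j) (le_ciInf hj)
  have hM0 : 0 < M := lt_of_lt_of_le hm0 (le_trans (hmle i₀) (hleM i₀))
  -- spectral data
  set U : Matrix (Fin N) (Fin N) ℂ := (hA.1.eigenvectorUnitary : Matrix (Fin N) (Fin N) ℂ)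
    with hU
  have hUU : U * star U = 1 := (Matrix.mem_unitaryGroup_iff).mp hA.1.eigenvectorUnitary.2
  have hUU' : star U * U = 1 := (Matrix.mem_unitaryGroup_iff').mp hA.1.eigenvectorUnitary.2
  set D : Matrix (Fin N) (Fin N) ℂ := diagonal (fun i => ((lam i : ℝ) : ℂ)) with hD
  set D' : Matrix (Fin N) (Fin N) ℂ := diagonal (fun i => (((lam i)⁻¹ : ℝ) : ℂ)) with hD'
  have hspec : A = U * D * star U := by
    have := hA.1.spectral_theorem
    exact this
  have hDD' : D * D' = 1 := by
    rw [hD, hD', diagonal_mul_diagonal]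
    ext i j
    by_cases h : i = j
    · subst h
      rw [diagonal_apply_eq, Matrix.one_apply_eq, ← Complex.ofReal_mul,
        mul_inv_cancel₀ (hpos i).ne', Complex.ofReal_one]
    · simp [diagonal_apply_ne _ h, Matrix.one_apply_ne h]
  have hinv : A⁻¹ = U * D' * star U := by
    apply Matrix.inv_eq_right_inv
    rw [hspec]
    calc U * D * star U * (U * D' * star U)
        = U * D * (star U * U) * D' * star U := by noncomm_ring
      _ = U * (D * D') * star U := by rw [hUU']; noncomm_ring
      _ = 1 := by rw [hDD', mul_one, hUU]
  -- the matrix C = (m+M)•1 - A - (m*M)•A⁻¹ is PSD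
  set g : Fin N → ℂ := fun i => ((m + M - lam i - m * M * (lam i)⁻¹ : ℝ) : ℂ) with hg
  have hgnn : ∀ i, (0 : ℂ) ≤ g i := by
    intro i
    rw [hg]
    rw [Complex.zero_le_real]
    have h1 : m * M * (lam i)⁻¹ ≤ m + M - lam i := by
      rw [mul_inv_le_iff₀ (hpos i)]
      nlinarith [mul_nonneg (sub_nonneg.2 (hmle i)) (sub_nonneg.2 (hleM i))]
    linarith
  set C : Matrix (Fin N) (Fin N) ℂ :=
    ((m + M : ℝ) : ℂ) • (1 : Matrix (Fin N) (Fin N) ℂ) - A - ((m * M : ℝ) : ℂ) • A⁻¹ with hC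
  have hdiagC : ((m + M : ℝ) : ℂ) • (1 : Matrix (Fin N) (Fin N) ℂ) - D - ((m * M : ℝ) : ℂ) • D'
      = diagonal g := by
    ext i j
    by_cases h : i = j
    · subst h
      simp only [hD, hD', hg, Matrix.sub_apply, Matrix.smul_apply, Matrix.one_apply_eq,
        diagonal_apply_eq, smul_eq_mul, mul_one]
      push_cast
      ring
    · simp [hD, hD', hg, Matrix.sub_apply, Matrix.smul_apply, Matrix.one_apply_ne h,
        diagonal_apply_ne _ h]
  have hCkey : C = U * diagonal g * star U := by
    have expand : U * (((m + M : ℝ) : ℂ) • (1 : Matrix (Fin N) (Fin N) ℂ) - D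
          - ((m * M : ℝ) : ℂ) • D') * star U
        = ((m + M : ℝ) : ℂ) • (U * 1 * star U) - U * D * star U
          - ((m * M : ℝ) : ℂ) • (U * D' * star U) := by
      rw [Matrix.mul_sub, Matrix.sub_mul, Matrix.mul_sub, Matrix.sub_mul,
        Matrix.mul_smul, Matrix.smul_mul, Matrix.mul_smul, Matrix.smul_mul]
    rw [← hdiagC, expand, mul_one, hUU, hC, ← hspec, ← hinv]
  have hCpsd : C.PosSemidef := by
    rw [hCkey]
    have := (Matrix.PosSemidef.diagonal hgnn).mul_mul_conjTranspose_same U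
    simpa [Matrix.star_eq_conjTranspose] using this
  -- diagonal entries
  have hdiag : ∀ i, 0 ≤ (C i i).re := by
    intro i
    have h := hCpsd.dotProduct_mulVec_nonneg (Pi.single i 1 : Fin N → ℂ)
    have h2 : star (Pi.single i 1 : Fin N → ℂ) ⬝ᵥ C *ᵥ Pi.single i 1 = C i i := by
      simp [dotProduct, mulVec, Pi.single_apply, Finset.sum_ite_eq, Finset.sum_ite_eq']
    rw [h2] at h
    exact (Complex.le_def.mp h).1
  have haii : ∀ i, 0 < (A i i).re := by
    intro i
    have h := hA.dotProduct_mulVec_pos (x := (Pi.single i 1 : Fin N → ℂ)) (by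
      intro hcon
      have := congrFun hcon i
      simp at this)
    have h2 : star (Pi.single i 1 : Fin N → ℂ) ⬝ᵥ A *ᵥ Pi.single i 1 = A i i := by
      simp [dotProduct, mulVec, Pi.single_apply, Finset.sum_ite_eq, Finset.sum_ite_eq']
    rw [h2] at h
    simpa using (Complex.lt_def.mp h).1
  have hkey : ∀ i, m * M * (A⁻¹ i i).re ≤ m + M - (A i i).re := by
    intro i
    have h := hdiag i
    have hCii : (C i i).re = (m + M) - (A i i).re - m * M * (A⁻¹ i i).re := by
      rw [hC]
      simp [Matrix.sub_apply, Matrix.smul_apply, Matrix.one_apply_eq, smul_eq_mul,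
        Complex.sub_re, Complex.mul_re, Complex.ofReal_re, Complex.ofReal_im]
    rw [hCii] at h
    linarith
  -- conclude
  have hκ : (1 + M / m) ^ 2 / (4 * (M / m)) = (m + M) ^ 2 / (4 * m * M) := by
    field_simp
  rw [hκ]
  have htr : (A⁻¹).trace.re = ∑ i, (A⁻¹ i i).re := by
    rw [Matrix.trace, Complex.re_sum]
    rfl
  rw [htr, Finset.mul_sum]
  apply Finset.sum_le_sum
  intro i _
  have ha := haii i
  have hk := hkey i
  rw [mul_one_div, le_div_iff₀ ha, le_div_iff₀ (by positivity : (0:ℝ) < 4 * m * M)]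
  have h5 := mul_le_mul_of_nonneg_left hk (by positivity : (0:ℝ) ≤ 4 * (A i i).re)
  nlinarith [sq_nonneg (m + M - 2 * (A i i).re), h5]
end
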